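/- arXiv:2107.01764 — 2 statements merged into one kernel-verified Lean document; each statement's English description precedes it below -/
import Mathlib

section
/- Let y : [0,∞) → ℝ be a nonnegative C¹ function satisfying y'(t) ≤ η − β·y(t)^a for all t > 0, where η > 0, β > 0, and a > 1. Then for every t > 0, y(t) ≤ (η/β)^(1/a) + (1/(β(a−1)t))^(1/(a−1)). -/
open Set Filter Real

private lemma superadd_rpow {u v p : ℝ} (hu : 0 ≤ u) (hv : 0 ≤ v) (hp : 1 ≤ p) :
    u ^ p + v ^ p ≤ (u + v) ^ p := by
  lift u to NNReal using hu
  lift v to NNReal using hv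
  have := NNReal.add_rpow_le_rpow_add u v hp
  rw [← NNReal.coe_add, ← NNReal.coe_rpow, ← NNReal.coe_rpow, ← NNReal.coe_rpow,
    ← NNReal.coe_add]
  exact_mod_cast this

theorem stmt_0 (y : ℝ → ℝ) (η β a : ℝ)
    (hη : 0 < η) (hβ : 0 < β) (ha : 1 < a)
    (hy_nonneg : ∀ t, 0 ≤ t → 0 ≤ y t)
    (hy_C1 : ContDiff ℝ 1 y)
    (hineq : ∀ t, 0 < t → deriv y t ≤ η - β * y t ^ a) :
    ∀ t, 0 < t →
      y t ≤ (η / β) ^ (1 / a) + (1 / (β * (a - 1) * t)) ^ (1 / (a - 1)) := by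
  intro t ht
  have ha1 : (0:ℝ) < a - 1 := sub_pos.2 ha
  have ha0 : (0:ℝ) < a := lt_trans one_pos ha
  set c : ℝ := β * (a - 1) with hc_def
  have hc : 0 < c := mul_pos hβ ha1
  set q : ℝ := -(1 / (a - 1)) with hq_def
  have hq : q < 0 := neg_neg_iff_pos.2 (one_div_pos.2 ha1)
  have hqne : q ≠ 0 := ne_of_lt hq
  -- rewrite goal RHS using q
  have hgoal_eq : (1 / (β * (a - 1) * t)) ^ (1 / (a - 1)) = (c * t) ^ q := by
    rw [hq_def, one_div (β * (a-1) * t), Real.inv_rpow (le_of_lt (mul_pos hc ht)),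
      ← Real.rpow_neg (le_of_lt (mul_pos hc ht))]
  rw [hgoal_eq]
  -- the z function and its derivative
  have hz' : ∀ s : ℝ, 0 < s →
      HasDerivAt (fun s => (c * s) ^ q) (-β * ((c * s) ^ q) ^ a) s := by
    intro s hs
    have hcs : 0 < c * s := mul_pos hc hs
    have hinner : HasDerivAt (fun s : ℝ => c * s) c s := by
      simpa using (hasDerivAt_id s).const_mul c
    have houter := (Real.hasDerivAt_rpow_const (x := c * s) (p := q)
      (Or.inl (ne_of_gt hcs))).comp s hinner
    refine HasDerivAt.congr_deriv houter ?_
    symm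
    have h1 : ((c * s) ^ q) ^ a = (c * s) ^ (q * a) :=
      (Real.rpow_mul (le_of_lt hcs) q a).symm
    have h2 : q * a = q - 1 := by
      rw [hq_def]; field_simp; ring
    have h3 : q * c = -β := by
      rw [hq_def, hc_def]; field_simp
    rw [h1, h2]
    calc -β * (c * s) ^ (q - 1) = q * (c * s) ^ (q - 1) * c := by rw [← h3]; ring
      _ = q * (c * s) ^ (q - 1) * c := rfl
  -- main estimate with ε
  have key : ∀ ε : ℝ, 0 < ε → y t ≤ ((η + ε) / β) ^ (1 / a) + (c * t) ^ q := by
    intro ε hε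
    set K : ℝ := ((η + ε) / β) ^ (1 / a) with hK_def
    have hK0 : 0 ≤ K := Real.rpow_nonneg (le_of_lt (div_pos (by linarith) hβ)) _
    have hKa : β * K ^ a = η + ε := by
      rw [hK_def, ← Real.rpow_mul (le_of_lt (div_pos (by linarith) hβ))]
      rw [one_div, inv_mul_cancel₀ (ne_of_gt ha0), Real.rpow_one,
        mul_div_cancel₀ _ (ne_of_gt hβ)]
    -- bound for y on [0, t]
    obtain ⟨M, hM1, hM⟩ : ∃ M : ℝ, 1 ≤ M ∧ ∀ s ∈ Icc (0:ℝ) t, y s ≤ M := by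
      obtain ⟨M, hM⟩ := (isCompact_Icc.image hy_C1.continuous).bddAbove
      exact ⟨max 1 M, le_max_left _ _,
        fun s hs => le_trans (hM (mem_image_of_mem y hs)) (le_max_right _ _)⟩
    have hM0 : 0 < M := lt_of_lt_of_le one_pos hM1
    -- choose small starting time t₀
    set t₀ : ℝ := min (t / 2) (M ^ (1 / q) / c) with ht₀_def
    have hMq : 0 < M ^ (1 / q) := Real.rpow_pos_of_pos hM0 _
    have ht₀_pos : 0 < t₀ := lt_min (by linarith) (div_pos hMq hc)
    have ht₀_lt : t₀ < t := lt_of_le_of_lt (min_le_left _ _) (by linarith)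
    have hzt₀ : M ≤ (c * t₀) ^ q := by
      have h1 : c * t₀ ≤ M ^ (1 / q) := by
        have := min_le_right (t / 2) (M ^ (1 / q) / c)
        calc c * t₀ ≤ c * (M ^ (1 / q) / c) := by
              exact mul_le_mul_of_nonneg_left this (le_of_lt hc)
          _ = M ^ (1 / q) := mul_div_cancel₀ _ (ne_of_gt hc)
      have h2 : (M ^ (1 / q)) ^ q ≤ (c * t₀) ^ q :=
        Real.rpow_le_rpow_of_nonpos (mul_pos hc ht₀_pos) h1 (le_of_lt hq)
      calc M = (M ^ (1 / q)) ^ q := by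
            rw [← Real.rpow_mul (le_of_lt hM0), one_div_mul_cancel hqne, Real.rpow_one]
        _ ≤ (c * t₀) ^ q := h2
    -- apply the fencing lemma on [t₀, t]
    set B : ℝ → ℝ := fun s => K + (c * s) ^ q with hB_def
    have hB' : ∀ s : ℝ, 0 < s → HasDerivAt B (-β * ((c * s) ^ q) ^ a) s := by
      intro s hs
      exact (hz' s hs).const_add K
    have hfc : ContinuousOn y (Icc t₀ t) := hy_C1.continuous.continuousOn
    have hfd : ∀ x ∈ Ico t₀ t, HasDerivWithinAt y (deriv y x) (Ici x) x := fun x _ =>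
      (hy_C1.differentiable one_ne_zero x).hasDerivAt.hasDerivWithinAt
    have hstart : y t₀ ≤ B t₀ := by
      have : y t₀ ≤ M := hM t₀ ⟨le_of_lt ht₀_pos, le_of_lt ht₀_lt⟩
      calc y t₀ ≤ M := this
        _ ≤ (c * t₀) ^ q := hzt₀
        _ ≤ K + (c * t₀) ^ q := le_add_of_nonneg_left hK0
    have hBc : ContinuousOn B (Icc t₀ t) := fun x hx =>
      (hB' x (lt_of_lt_of_le ht₀_pos hx.1)).continuousAt.continuousWithinAt
    have hBd : ∀ x ∈ Ico t₀ t, HasDerivWithinAt B (-β * ((c * x) ^ q) ^ a) (Ici x) x :=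
      fun x hx => (hB' x (lt_of_lt_of_le ht₀_pos hx.1)).hasDerivWithinAt
    have hbound : ∀ x ∈ Ico t₀ t, y x = B x →
        deriv y x < -β * ((c * x) ^ q) ^ a := by
      intro x hx hxy
      have hx0 : 0 < x := lt_of_lt_of_le ht₀_pos hx.1
      have hz0 : 0 ≤ (c * x) ^ q := Real.rpow_nonneg (le_of_lt (mul_pos hc hx0)) _
      have hsup : K ^ a + ((c * x) ^ q) ^ a ≤ (K + (c * x) ^ q) ^ a :=
        superadd_rpow hK0 hz0 (le_of_lt ha)
      have hd : deriv y x ≤ η - β * (K + (c * x) ^ q) ^ a := by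
        have h := hineq x hx0
        rwa [hxy] at h
      have h4 : η - β * (K + (c * x) ^ q) ^ a
          ≤ η - β * (K ^ a + ((c * x) ^ q) ^ a) := by
        have := mul_le_mul_of_nonneg_left hsup (le_of_lt hβ)
        linarith
      have h5 : η - β * (K ^ a + ((c * x) ^ q) ^ a)
          = -β * ((c * x) ^ q) ^ a - ε := by
        have : β * (K ^ a + ((c * x) ^ q) ^ a)
            = (η + ε) + β * ((c * x) ^ q) ^ a := by rw [mul_add, hKa]
        linarith
      calc deriv y x ≤ η - β * (K + (c * x) ^ q) ^ a := hd
        _ ≤ η - β * (K ^ a + ((c * x) ^ q) ^ a) := h4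
        _ = -β * ((c * x) ^ q) ^ a - ε := h5
        _ < -β * ((c * x) ^ q) ^ a := by linarith
    exact image_le_of_deriv_right_lt_deriv_boundary' hfc hfd hstart hBc hBd hbound
      ⟨le_of_lt ht₀_lt, le_refl t⟩
  -- let ε → 0⁺
  have hcont : ContinuousAt (fun ε : ℝ => ((η + ε) / β) ^ (1 / a) + (c * t) ^ q) 0 := by
    have h1 : ContinuousAt (fun ε : ℝ => (η + ε) / β) 0 :=
      ((continuous_const.add continuous_id).div_const β).continuousAt
    have h2 : ContinuousAt (fun ε : ℝ => ((η + ε) / β) ^ (1 / a)) 0 := by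
      apply h1.rpow_const
      left
      simp only [add_zero]
      exact ne_of_gt (div_pos hη hβ)
    exact h2.add continuousAt_const
  have htend : Tendsto (fun ε : ℝ => ((η + ε) / β) ^ (1 / a) + (c * t) ^ q)
      (nhdsWithin 0 (Ioi 0)) (nhds ((η / β) ^ (1 / a) + (c * t) ^ q)) := by
    have := hcont.tendsto
    simp only [add_zero] at this
    exact tendsto_nhdsWithin_of_tendsto_nhds this
  refine ge_of_tendsto htend ?_
  filter_upwards [eventually_mem_nhdsWithin] with ε hε
  exact key ε hε
end

section
/- Fix n ≥ 1, m > 1, α ≥ 1, k > 1. Let r = (1−λ)(k+α−1)/(1 − λ(k+α−1)/(k+m−1)) and θ = (k'−1)(k+α−1)/(k'(k+α−2)), where λ = ((k+m−1)/(2k') − (k+m−1)/(2(k+α−1)))/((k+m−1)/(2k') − (n−2)/(2n)) and k' is any real with max(n(α−m)/2, 1) < k' < k+α−1. Then rθ < k+α−1 if and only if α < m + 2/n. -/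
theorem stmt_6 (n : ℕ) (hn : 1 ≤ n) (m α k k' : ℝ)
    (hm : 1 < m) (hα : 1 ≤ α) (hk : 1 < k)
    (hk'lo : max (n * (α - m) / 2) 1 < k') (hk'hi : k' < k + α - 1) :
    (((1 - ((k + m - 1) / (2 * k') - (k + m - 1) / (2 * (k + α - 1))) /
          ((k + m - 1) / (2 * k') - (n - 2) / (2 * n))) * (k + α - 1)) /
        (1 - (((k + m - 1) / (2 * k') - (k + m - 1) / (2 * (k + α - 1))) /
            ((k + m - 1) / (2 * k') - (n - 2) / (2 * n))) * (k + α - 1) / (k + m - 1))) *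
      ((k' - 1) * (k + α - 1) / (k' * (k + α - 2))) < k + α - 1 ↔
    α < m + 2 / n := by
  have hN1 : (1:ℝ) ≤ (n:ℝ) := by exact_mod_cast hn
  have hN0 : (0:ℝ) < (n:ℝ) := by linarith
  have hk'1 : (1:ℝ) < k' := lt_of_le_of_lt (le_max_right _ _) hk'lo
  have hAk' : (n:ℝ) * (α - m) / 2 < k' := lt_of_le_of_lt (le_max_left _ _) hk'lo
  have hA2 : 0 < (n:ℝ) * (m - α) + 2 * k' := by nlinarith
  have hK1 : 1 < k + α - 1 := by linarith
  have hM1 : 1 < k + m - 1 := by linarith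
  have hk'0 : (0:ℝ) < k' := by linarith
  have hK0 : (0:ℝ) < k + α - 1 := by linarith
  have hKk' : 0 < k + α - 1 - k' := by linarith
  have hD : 0 < (k + m - 1) / (2 * k') - ((n:ℝ) - 2) / (2 * (n:ℝ)) := by
    rw [sub_pos, div_lt_div_iff₀ (by positivity) (by positivity)]
    nlinarith [mul_pos hN0 hKk']
  set d := (k + m - 1) / (2 * k') - ((n:ℝ) - 2) / (2 * (n:ℝ)) with hd
  have e1 : 1 - ((k + m - 1) / (2 * k') - (k + m - 1) / (2 * (k + α - 1))) / d
      = (((n:ℝ) * (m - α) + 2 * (k + α - 1)) / (2 * (n:ℝ) * (k + α - 1))) / d := by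
    rw [one_sub_div hD.ne']
    congr 1
    rw [hd]
    field_simp
    ring
  have e2 : 1 - ((k + m - 1) / (2 * k') - (k + m - 1) / (2 * (k + α - 1))) / d *
        (k + α - 1) / (k + m - 1)
      = (((n:ℝ) * (m - α) + 2 * k') / (2 * (n:ℝ) * k')) / d := by
    have h4 : ((k + m - 1) / (2 * k') - (k + m - 1) / (2 * (k + α - 1))) / d *
          (k + α - 1) / (k + m - 1)
        = (((k + m - 1) / (2 * k') - (k + m - 1) / (2 * (k + α - 1))) *
            (k + α - 1) / (k + m - 1)) / d := by
      ring
    have h3 : ((k + m - 1) / (2 * k') - (k + m - 1) / (2 * (k + α - 1))) *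
          (k + α - 1) / (k + m - 1) = ((k + α - 1) - k') / (2 * k') := by
      field_simp
    rw [h4, h3, one_sub_div hD.ne']
    congr 1
    rw [hd]
    field_simp
    ring
  rw [e1, e2]
  have hE : ((((n:ℝ) * (m - α) + 2 * (k + α - 1)) / (2 * (n:ℝ) * (k + α - 1))) / d *
          (k + α - 1)) /
        ((((n:ℝ) * (m - α) + 2 * k') / (2 * (n:ℝ) * k')) / d) *
      ((k' - 1) * (k + α - 1) / (k' * (k + α - 2)))
      = (k + α - 1) * (k' - 1) * ((n:ℝ) * (m - α) + 2 * (k + α - 1)) /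
        ((k + α - 2) * ((n:ℝ) * (m - α) + 2 * k')) := by
    have hd0 : d ≠ 0 := hD.ne'
    have h1 : (k + α - 2) ≠ 0 := by linarith
    have h2 : ((n:ℝ) * (m - α) + 2 * k') ≠ 0 := ne_of_gt hA2
    field_simp
  rw [hE]
  have hdenpos : 0 < (k + α - 2) * ((n:ℝ) * (m - α) + 2 * k') :=
    mul_pos (by linarith) hA2
  rw [div_lt_iff₀ hdenpos]
  clear e1 e2 hE hd hD hdenpos
  constructor
  · intro h
    have h' : (α - m) * (n:ℝ) < 2 := by
      nlinarith [mul_pos hK0 hKk']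
    have : α - m < 2 / (n:ℝ) := by
      rw [lt_div_iff₀ hN0]; linarith
    linarith
  · intro h
    have h' : (α - m) * (n:ℝ) < 2 := by
      have : α - m < 2 / (n:ℝ) := by linarith
      rw [lt_div_iff₀ hN0] at this; linarith
    have h6 : 0 < (n:ℝ) * (m - α) + 2 := by linarith
    nlinarith [mul_pos (mul_pos hK0 hKk') h6]
end
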